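/- arXiv:2505.15321 — 3 statements merged into one kernel-verified Lean document; each statement's English description precedes it below -/
import Mathlib

section
/- A minimal system {x_k} in a separable Hilbert space H with biorthogonal system {x_k*} is hereditarily complete if and only if for every partition of the natural numbers into disjoint sets N1 and N2, the mixed system {x_k : k in N1} ∪ {x_k* : k in N2} is complete in H. -/
open Filter Topology

noncomputable section

variable {H : Type*} [NormedAddCommGroup H] [InnerProductSpace ℂ H] [CompleteSpace H]

/-- Closed linear span of a set of vectors. -/
def clSpan (s : Set H) : Submodule ℂ H := (Submodule.span ℂ s).topologicalClosure

instance (s : Set H) : CompleteSpace (clSpan s) :=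
  (Submodule.isClosed_topologicalClosure _).completeSpace_coe

/-- Orthogonal projection onto the closed linear span of `s`, as a map `H → H`. -/
def projS (s : Set H) : H →L[ℂ] H :=
  (clSpan s).subtypeL ∘L (clSpan s).orthogonalProjectionOnto

/-- The system `x` is complete: its closed linear span is all of `H`. -/
def IsCompleteSystem (x : ℕ → H) : Prop := clSpan (Set.range x) = ⊤

/-- The system `x` is minimal: no vector lies in the closed span of the others. -/
def IsMinimalSystem (x : ℕ → H) : Prop :=
  ∀ k, x k ∉ clSpan (x '' {j | j ≠ k})

/-- `y` is biorthogonal to `x`. -/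
def IsBiorthogonal (x y : ℕ → H) : Prop :=
  ∀ k j, (inner ℂ (x k) (y j) : ℂ) = if k = j then 1 else 0

lemma mem_orthogonal_span_of_forall {s : Set H} {v : H}
    (h : ∀ u ∈ s, (inner ℂ u v : ℂ) = 0) : v ∈ (Submodule.span ℂ s)ᗮ := by
  rw [Submodule.mem_orthogonal]
  intro u hu
  induction hu using Submodule.span_induction with
  | mem u hu => exact h u hu
  | zero => simp
  | add a b _ _ ha hb => simp [inner_add_left, ha, hb]
  | smul c a _ ha => simp [inner_smul_left, ha]

lemma clSpan_orthogonal (s : Set H) : (clSpan s : Submodule ℂ H)ᗮ = (Submodule.span ℂ s)ᗮ := by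
  rw [clSpan, ← Submodule.orthogonal_orthogonal_eq_closure, Submodule.triorthogonal_eq_orthogonal]

lemma mem_clSpan_of_subset {s t : Set H} (h : s ⊆ (Submodule.span ℂ t : Submodule ℂ H)) :
    clSpan s ≤ clSpan t := by
  show (Submodule.span ℂ s).topologicalClosure ≤ clSpan t
  refine Submodule.topologicalClosure_minimal _ ?_ (Submodule.isClosed_topologicalClosure _)
  exact (Submodule.span_le.2 h).trans (Submodule.le_topologicalClosure _)

lemma mem_clSpan_self {s : Set H} {u : H} (h : u ∈ s) : u ∈ clSpan s :=
  Submodule.le_topologicalClosure _ (Submodule.subset_span h)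

/-- A minimal system with biorthogonal system `y` is hereditarily complete (it is complete and
every vector lies in the closed span of `(x, x_k^*) x_k`) iff every mixed system
`{x_k}_{k ∈ N₁} ∪ {x_k^*}_{k ∈ N₂}` (for a partition `ℕ = N₁ ⊔ N₂`) is complete. -/
theorem hereditarily_complete_iff_mixed_complete
    [TopologicalSpace.SeparableSpace H]
    (x y : ℕ → H) (hmin : IsMinimalSystem x) (hbi : IsBiorthogonal x y) :
    (IsCompleteSystem x ∧
      ∀ z : H, z ∈ clSpan (Set.range fun k => (inner ℂ (y k) z : ℂ) • x k)) ↔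
      ∀ N : Set ℕ, clSpan (x '' N ∪ y '' Nᶜ) = ⊤ := by
  constructor
  · rintro ⟨-, hher⟩ N
    rw [clSpan, Submodule.topologicalClosure_eq_top_iff, Submodule.eq_bot_iff]
    intro h hh
    rw [Submodule.mem_orthogonal] at hh
    -- h is orthogonal to all x k (k ∈ N) and all y k (k ∈ Nᶜ)
    have hx : ∀ k ∈ N, (inner ℂ (x k) h : ℂ) = 0 := fun k hk =>
      hh _ (Submodule.subset_span (Or.inl ⟨k, hk, rfl⟩))
    have hy : ∀ k ∈ Nᶜ, (inner ℂ (y k) h : ℂ) = 0 := fun k hk =>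
      hh _ (Submodule.subset_span (Or.inr ⟨k, hk, rfl⟩))
    -- then the system of coefficient vectors for h lies in span (x '' N)
    have hsub : Set.range (fun k => (inner ℂ (y k) h : ℂ) • x k) ⊆
        (Submodule.span ℂ (x '' N) : Submodule ℂ H) := by
      rintro - ⟨k, rfl⟩
      show (inner ℂ (y k) h : ℂ) • x k ∈ _
      by_cases hk : k ∈ N
      · exact Submodule.smul_mem _ _ (Submodule.subset_span ⟨k, hk, rfl⟩)
      · rw [hy k hk, zero_smul]; exact (Submodule.span ℂ _).zero_mem
    have hmem : h ∈ clSpan (x '' N) := mem_clSpan_of_subset hsub (hher h)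
    -- but h is orthogonal to clSpan (x '' N)
    have horth : h ∈ (clSpan (x '' N) : Submodule ℂ H)ᗮ := by
      rw [clSpan_orthogonal]
      exact mem_orthogonal_span_of_forall (by rintro - ⟨k, hk, rfl⟩; exact hx k hk)
    have := Submodule.inner_right_of_mem_orthogonal hmem horth
    simpa [inner_self_eq_zero] using this
  · intro hmix
    constructor
    · have := hmix Set.univ
      simpa [IsCompleteSystem, Set.image_univ] using this
    · intro z
      set N : Set ℕ := {k | (inner ℂ (y k) z : ℂ) ≠ 0} with hN
      -- the span of the coefficient vectors equals the span of x '' N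
      have hsub : x '' N ⊆
          (Submodule.span ℂ (Set.range fun k => (inner ℂ (y k) z : ℂ) • x k) : Submodule ℂ H) := by
        rintro - ⟨k, hk, rfl⟩
        have : x k = ((inner ℂ (y k) z : ℂ))⁻¹ • ((inner ℂ (y k) z : ℂ) • x k) := by
          rw [smul_smul, inv_mul_cancel₀ hk, one_smul]
        rw [this]
        exact Submodule.smul_mem _ _ (Submodule.subset_span ⟨k, rfl⟩)
      suffices hz : z ∈ clSpan (x '' N) by exact mem_clSpan_of_subset hsub hz
      -- decompose z; the orthogonal remainder w is orthogonal to the mixed system for N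
      set M := clSpan (x '' N) with hM
      set w : H := z - (M.orthogonalProjectionOnto z : H) with hw
      have hwM : w ∈ Mᗮ := Submodule.sub_starProjection_mem_orthogonal (K := M) z
      have hwmix : w ∈ (Submodule.span ℂ (x '' N ∪ y '' Nᶜ))ᗮ := by
        apply mem_orthogonal_span_of_forall
        rintro - (⟨k, hk, rfl⟩ | ⟨k, hk, rfl⟩)
        · have hxk : x k ∈ M := mem_clSpan_self (Set.mem_image_of_mem x hk)
          exact Submodule.inner_right_of_mem_orthogonal hxk hwM
        · -- k ∉ N : inner (y k) z = 0, and y k ⟂ M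
          have hk0 : (inner ℂ (y k) z : ℂ) = 0 := by simpa [hN] using hk
          have hyk : y k ∈ Mᗮ := by
            rw [hM, clSpan_orthogonal]
            apply mem_orthogonal_span_of_forall
            rintro - ⟨j, hj, rfl⟩
            have hne : j ≠ k := by rintro rfl; exact hk (by simpa [hN] using hj)
            simpa [hne] using hbi j k
          have : (inner ℂ (y k) (M.orthogonalProjectionOnto z : H) : ℂ) = 0 := by
            rw [← inner_conj_symm]
            rw [Submodule.inner_right_of_mem_orthogonal (M.orthogonalProjectionOnto z).2 hyk]
            simp
          rw [hw, inner_sub_right, hk0, this, sub_zero]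
      have hw0 : w = 0 := by
        have htop := hmix N
        rw [clSpan, Submodule.topologicalClosure_eq_top_iff, Submodule.eq_bot_iff] at htop
        exact htop w hwmix
      have hz' : z = (M.orthogonalProjectionOnto z : H) := sub_eq_zero.mp (by rw [← hw, hw0])
      rw [hz']
      exact (M.orthogonalProjectionOnto z).2
end
end

section
/- For a normalized complete minimal system {x_k}, the function σ ↦ d_s(P_σ, 0) = Σ_j ‖P_σ x_j‖/2^j is lower semicontinuous on 𝔓(ℕ) with the product topology. -/
open Filter Topology

noncomputable section

variable {H : Type*} [NormedAddCommGroup H] [InnerProductSpace ℂ H] [CompleteSpace H]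

lemma norm_projS_le (s : Set H) (v : H) : ‖projS s v‖ ≤ ‖v‖ := by
  have := Submodule.orthogonalProjectionOnto_norm_le (clSpan s)
  calc ‖projS s v‖ = ‖(clSpan s).orthogonalProjectionOnto v‖ := rfl
    _ ≤ ‖(clSpan s).orthogonalProjectionOnto‖ * ‖v‖ := ((clSpan s).orthogonalProjectionOnto).le_opNorm v
    _ ≤ 1 * ‖v‖ := by gcongr
    _ = ‖v‖ := one_mul _

lemma inner_eq_projS (s : Set H) (v z : H) (hz : z ∈ clSpan s) :
    (inner ℂ v z : ℂ) = inner ℂ (projS s v) z := by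
  have h : v - projS s v ∈ (clSpan s)ᗮ := Submodule.sub_starProjection_mem_orthogonal (K := clSpan s) v
  have h0 : (inner ℂ (v - projS s v) z : ℂ) = 0 :=
    (Submodule.mem_orthogonal' _ _).mp h z hz
  rw [inner_sub_left] at h0
  linear_combination h0

lemma abs_inner_le_projS (s : Set H) (v z : H) (hz : z ∈ clSpan s) :
    ‖(inner ℂ v z : ℂ)‖ ≤ ‖projS s v‖ * ‖z‖ := by
  rw [inner_eq_projS s v z hz]
  exact norm_inner_le_norm _ _

lemma inner_self_projS (s : Set H) (v : H) :
    (inner ℂ v (projS s v) : ℂ) = (‖projS s v‖ : ℂ) ^ 2 := by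
  have hz : projS s v ∈ clSpan s := ((clSpan s).orthogonalProjectionOnto v).2
  rw [inner_eq_projS s v _ hz, inner_self_eq_norm_sq_to_K]; norm_cast

lemma lsc_proj_norm (x : ℕ → H) (j : ℕ) :
    LowerSemicontinuous (fun a : ℕ → Bool => ‖projS (x '' {k | a k = true}) (x j)‖) := by
  intro a₀ c hc
  rcases lt_or_ge c 0 with hneg | hc0
  · exact Eventually.of_forall fun a => hneg.trans_le (norm_nonneg _)
  set σ₀ : Set ℕ := {k | a₀ k = true} with hσ₀
  set t := ‖projS (x '' σ₀) (x j)‖ with ht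
  have htc : c < t := hc
  have ht0 : 0 < t := hc0.trans_lt htc
  set ε := t * (t - c) / (‖x j‖ + c + 1) with hε
  have hD : (0:ℝ) < ‖x j‖ + c + 1 := by positivity
  have hε0 : 0 < ε := by
    apply div_pos _ hD
    nlinarith
  have hεD : ε * (‖x j‖ + c + 1) = t * (t - c) := by
    rw [hε, div_mul_cancel₀ _ hD.ne']
  have hkey : c * (t + ε) + ε * ‖x j‖ < t * t := by nlinarith [norm_nonneg (x j)]
  set P := projS (x '' σ₀) (x j) with hP
  have hmem : P ∈ closure ((Submodule.span ℂ (x '' σ₀) : Submodule ℂ H) : Set H) := by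
    rw [← Submodule.topologicalClosure_coe]
    exact ((clSpan (x '' σ₀)).orthogonalProjectionOnto (x j)).2
  obtain ⟨z, hzspan, hzdist⟩ := Metric.mem_closure_iff.mp hmem ε hε0
  rw [dist_eq_norm] at hzdist
  have hz1 : ‖z‖ ≤ t + ε := by
    have h1 : ‖z‖ - ‖P‖ ≤ ‖z - P‖ := norm_sub_norm_le z P
    rw [norm_sub_rev] at h1
    linarith [hzdist]
  have hIP : ‖(inner ℂ (x j) P : ℂ)‖ = t ^ 2 := by
    rw [hP, inner_self_projS]
    simp [abs_of_nonneg (norm_nonneg ((projS (x '' σ₀)) (x j)))]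
    rfl
  have hinner : t * t - ε * ‖x j‖ ≤ ‖(inner ℂ (x j) z : ℂ)‖ := by
    have e : (inner ℂ (x j) P : ℂ) - inner ℂ (x j) z = inner ℂ (x j) (P - z) :=
      (inner_sub_right _ _ _).symm
    have h1 : ‖(inner ℂ (x j) P : ℂ)‖ - ‖(inner ℂ (x j) z : ℂ)‖ ≤ ‖(inner ℂ (x j) (P - z) : ℂ)‖ := by
      rw [← e]; exact norm_sub_norm_le _ _
    have h2 : ‖(inner ℂ (x j) (P - z) : ℂ)‖ ≤ ‖x j‖ * ‖P - z‖ := norm_inner_le_norm _ _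
    have h3 : ‖x j‖ * ‖P - z‖ ≤ ‖x j‖ * ε :=
      mul_le_mul_of_nonneg_left hzdist.le (norm_nonneg _)
    nlinarith [hIP]
  obtain ⟨T, hTsub, hzT⟩ := Submodule.mem_span_finite_of_mem_span hzspan
  classical
  set f : H → ℕ := fun v => if h : ∃ k, a₀ k = true ∧ x k = v then h.choose else 0 with hf
  have hfspec : ∀ v ∈ (T : Set H), a₀ (f v) = true ∧ x (f v) = v := by
    intro v hv
    obtain ⟨k, hk, rfl⟩ := hTsub hv
    have hex : ∃ k', a₀ k' = true ∧ x k' = x k := ⟨k, hk, rfl⟩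
    simp only [hf, dif_pos hex]
    exact hex.choose_spec
  set G : Finset ℕ := T.image f with hG
  have hev : ∀ᶠ a in 𝓝 a₀, ∀ k ∈ G, a k = true := by
    rw [eventually_all_finset]
    intro k hk
    obtain ⟨v, hv, rfl⟩ := Finset.mem_image.mp hk
    have hk0 : a₀ (f v) = true := (hfspec v hv).1
    have hopen : IsOpen ((fun b : ℕ → Bool => b (f v)) ⁻¹' {true}) :=
      IsOpen.preimage (continuous_apply (f v)) (isOpen_discrete ({true} : Set Bool))
    have hmemn : (fun b : ℕ → Bool => b (f v)) ⁻¹' {true} ∈ 𝓝 a₀ :=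
      hopen.mem_nhds (by simp [hk0])
    exact hmemn
  filter_upwards [hev] with a ha
  have hTsub' : (T : Set H) ⊆ x '' {k | a k = true} := by
    intro v hv
    exact ⟨f v, ha (f v) (Finset.mem_image_of_mem f hv), (hfspec v hv).2⟩
  have hzmem : z ∈ clSpan (x '' {k | a k = true}) :=
    Submodule.le_topologicalClosure _
      (Submodule.span_mono hTsub' (by exact_mod_cast hzT))
  have hfin := abs_inner_le_projS (x '' {k | a k = true}) (x j) z hzmem
  set N := ‖projS (x '' {k | a k = true}) (x j)‖ with hN
  by_contra hcon
  push_neg at hcon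
  have hz0 : 0 ≤ ‖z‖ := norm_nonneg z
  nlinarith [hinner, hfin, hz1, hkey, mul_le_mul_of_nonneg_right hcon hz0]

/-- For a normalized complete minimal system, the function `σ ↦ d_s(P_σ, 0)` is lower
semicontinuous on `𝔓(ℕ)` (identified with `ℕ → Bool` with the product topology). -/
theorem ds_lowerSemicontinuous [TopologicalSpace.SeparableSpace H]
    (x : ℕ → H) (hc : IsCompleteSystem x) (hmin : IsMinimalSystem x)
    (hnorm : ∀ k, ‖x k‖ = 1) :
    LowerSemicontinuous
      (fun a : ℕ → Bool => ∑' j : ℕ, ‖projS (x '' {k | a k = true}) (x j)‖ / 2 ^ j) := by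
  have hterm : ∀ j : ℕ, LowerSemicontinuous
      (fun a : ℕ → Bool => ‖projS (x '' {k | a k = true}) (x j)‖ / 2 ^ j) := by
    intro j a c hcj
    have h2 : (0:ℝ) < 2 ^ j := by positivity
    have := lsc_proj_norm x j a (c * 2 ^ j) ((lt_div_iff₀ h2).mp hcj)
    filter_upwards [this] with b hb
    rwa [gt_iff_lt, lt_div_iff₀ h2]
  have hsum : ∀ a : ℕ → Bool, Summable
      (fun j : ℕ => ‖projS (x '' {k | a k = true}) (x j)‖ / 2 ^ j) := by
    intro a
    refine Summable.of_nonneg_of_le (fun j => by positivity) (fun j => ?_)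
      summable_geometric_two
    have h1 : ‖projS (x '' {k | a k = true}) (x j)‖ ≤ 1 :=
      (norm_projS_le _ _).trans_eq (hnorm j)
    rw [div_pow, one_pow]
    gcongr
  intro a c hca
  obtain ⟨s, hs⟩ : ∃ s : Finset ℕ,
      c < ∑ j ∈ s, ‖projS (x '' {k | a k = true}) (x j)‖ / 2 ^ j :=
    ((hsum a).hasSum.eventually (eventually_gt_nhds hca)).exists
  have hfs : LowerSemicontinuous
      (fun b : ℕ → Bool => ∑ j ∈ s, ‖projS (x '' {k | b k = true}) (x j)‖ / 2 ^ j) :=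
    lowerSemicontinuous_sum fun j _ => hterm j
  filter_upwards [hfs a c hs] with b hb
  exact hb.trans_le ((hsum b).sum_le_tsum s (fun j _ => by positivity))
end
end

section
/- If {x_k} is a hereditarily complete system in H with biorthogonal {x_k*}, then for every σ ⊆ ℕ the mixed system {x_k}_{k∈σ} ∪ {x_k*}_{k∈σ^c} is also hereditarily complete. -/
open Filter Topology

noncomputable section

variable {H : Type*} [NormedAddCommGroup H] [InnerProductSpace ℂ H] [CompleteSpace H]

/-- Mixed systems of a hereditarily complete system are hereditarily complete: if every mixed
system of `x` (with biorthogonal `y`) is complete, `σ ⊆ ℕ`, and `w` is the mixed system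
for `σ` (with its biorthogonal `w'`), then every mixed system of `w` is complete. -/
theorem mixed_of_hereditarily_complete [TopologicalSpace.SeparableSpace H]
    (x y : ℕ → H) (hc : IsCompleteSystem x) (hmin : IsMinimalSystem x)
    (hbi : IsBiorthogonal x y)
    (hered : ∀ N : Set ℕ, clSpan (x '' N ∪ y '' Nᶜ) = ⊤)
    (σ : Set ℕ) (w w' : ℕ → H)
    (hw : ∀ k ∈ σ, w k = x k ∧ w' k = y k)
    (hw' : ∀ k ∉ σ, w k = y k ∧ w' k = x k) :
    ∀ N : Set ℕ, clSpan (w '' N ∪ w' '' Nᶜ) = ⊤ := by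
  intro N
  set M : Set ℕ := (N ∩ σ) ∪ (Nᶜ ∩ σᶜ) with hM
  have hset : w '' N ∪ w' '' Nᶜ = x '' M ∪ y '' Mᶜ := by
    have hMc : Mᶜ = (N ∩ σᶜ) ∪ (Nᶜ ∩ σ) := by
      rw [hM]
      ext k
      simp only [Set.mem_compl_iff, Set.mem_union, Set.mem_inter_iff]
      by_cases hk : k ∈ N <;> by_cases hs : k ∈ σ <;> simp [hk, hs]
    ext v
    rw [hMc]
    simp only [Set.mem_union, Set.mem_image, hMc, hM, Set.mem_inter_iff,
      Set.mem_compl_iff]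
    constructor
    · rintro (⟨k, hk, rfl⟩ | ⟨k, hk, rfl⟩)
      · by_cases hs : k ∈ σ
        · exact Or.inl ⟨k, Or.inl ⟨hk, hs⟩, ((hw k hs).1).symm⟩
        · exact Or.inr ⟨k, Or.inl ⟨hk, hs⟩, ((hw' k hs).1).symm⟩
      · by_cases hs : k ∈ σ
        · exact Or.inr ⟨k, Or.inr ⟨hk, hs⟩, ((hw k hs).2).symm⟩
        · exact Or.inl ⟨k, Or.inr ⟨hk, hs⟩, ((hw' k hs).2).symm⟩
    · rintro (⟨k, (⟨hk, hs⟩ | ⟨hk, hs⟩), rfl⟩ | ⟨k, (⟨hk, hs⟩ | ⟨hk, hs⟩), rfl⟩)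
      · exact Or.inl ⟨k, hk, (hw k hs).1⟩
      · exact Or.inr ⟨k, hk, (hw' k hs).2⟩
      · exact Or.inl ⟨k, hk, (hw' k hs).1⟩
      · exact Or.inr ⟨k, hk, (hw k hs).2⟩
  rw [hset]
  exact hered M
end
end
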